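/- Let G be the graph G(a_1,…,a_n) constructed from positive integers a_1,…,a_n, with distinguished vertices s and t and with top edges (v_i, v_{i+1}) for 1 ≤ i ≤ n. For every strong orientation of G, every directed path P from s to t, and every directed path Q from t to s, the edge sets of P and Q partition the set of top edges: every top edge lies on P or on Q, and no top edge lies on both. -/

import Mathlib

def IsOrientation {V : Type*} (G : SimpleGraph V) (D : V → V → Prop) : Prop :=
  (∀ u v, D u v → G.Adj u v) ∧ ∀ u v, G.Adj u v → (D u v ↔ ¬ D v u)

/-- `f : Fin (k+1) → V` is a directed walk of length `k` from `u` to `v` in the digraph `D`. -/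
def IsDiwalk {V : Type*} (D : V → V → Prop) {k : ℕ} (f : Fin (k + 1) → V) (u v : V) : Prop :=
  f 0 = u ∧ f (Fin.last k) = v ∧ ∀ i : Fin k, D (f i.castSucc) (f i.succ)

/-- A digraph is strong if every vertex is reachable from every other vertex. -/
def IsStrong {V : Type*} (D : V → V → Prop) : Prop :=
  ∀ u v : V, ∃ (k : ℕ) (f : Fin (k + 1) → V), IsDiwalk D f u v

/-- Directed distance: the length of a shortest directed walk from `u` to `v`. -/
noncomputable def dirDist {V : Type*} (D : V → V → Prop) (u v : V) : ℕ :=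
  sInf {k | ∃ f : Fin (k + 1) → V, IsDiwalk D f u v}

/-- Diameter of a digraph: maximum directed distance over ordered pairs of distinct vertices. -/
noncomputable def dirDiam {V : Type*} (D : V → V → Prop) : ℕ :=
  sSup {d | ∃ u v : V, u ≠ v ∧ d = dirDist D u v}

/-- Vertices of the gadget graph `G(a₁,…,aₙ)`: top-row vertices `v i` and bottom-row
vertices `w i` for the columns `i = 0, …, n`, the subdivision vertices `s` and `t`, and the
inner-cycle vertices `d j`, `d' j` replacing the internal vertical edge at column `j + 1`
(for `j : Fin (n - 1)`). -/
inductive GV (n : ℕ) : Type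
  | v (i : Fin (n + 1))
  | w (i : Fin (n + 1))
  | s
  | t
  | d (j : Fin (n - 1))
  | d' (j : Fin (n - 1))

/-- The internal column corresponding to the index `j : Fin (n - 1)` is column `j + 1`. -/
def GV.col {n : ℕ} (j : Fin (n - 1)) : Fin (n + 1) :=
  ⟨(j : ℕ) + 1, by have := j.isLt; omega⟩

/-- The edges of the gadget graph `G(a₁,…,aₙ)`: the top edges `(v i, v (i+1))`, the bottom
edges `(w i, w (i+1))`, the subdivided left and right vertical edges through `s` resp. `t`,
and for each internal column the 4-cycle `v, d, w, d'`. -/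
def gridEdges (n : ℕ) : Set (Sym2 (GV n)) :=
  {e | (∃ i : Fin n, e = s(GV.v i.castSucc, GV.v i.succ)) ∨
       (∃ i : Fin n, e = s(GV.w i.castSucc, GV.w i.succ)) ∨
       e = s(GV.s, GV.v 0) ∨ e = s(GV.s, GV.w 0) ∨
       e = s(GV.t, GV.v (Fin.last n)) ∨ e = s(GV.t, GV.w (Fin.last n)) ∨
       (∃ j : Fin (n - 1),
         e = s(GV.d j, GV.v (GV.col j)) ∨ e = s(GV.d j, GV.w (GV.col j)) ∨
         e = s(GV.d' j, GV.v (GV.col j)) ∨ e = s(GV.d' j, GV.w (GV.col j)))}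

/-- The gadget graph `G(a₁,…,aₙ)` (as an unweighted simple graph). -/
def gridGraph (n : ℕ) : SimpleGraph (GV n) := SimpleGraph.fromEdgeSet (gridEdges n)

/-- `f` is a directed path (a directed walk with no repeated vertex) from `u` to `v`. -/
def IsDipath {V : Type*} (D : V → V → Prop) {k : ℕ} (f : Fin (k + 1) → V) (u v : V) : Prop :=
  IsDiwalk D f u v ∧ Function.Injective f

/-- The (undirected) edge `{x, y}` is traversed by the directed walk `f`. -/
def EdgeOnDiwalk {V : Type*} {k : ℕ} (f : Fin (k + 1) → V) (x y : V) : Prop :=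
  ∃ j : Fin k, (f j.castSucc = x ∧ f j.succ = y) ∨ (f j.castSucc = y ∧ f j.succ = x)


/-- Column position of a vertex of the gadget graph. -/
def posGV {n : ℕ} : GV n → ℕ
  | .v i => i
  | .w i => i
  | .s => 0
  | .t => n
  | .d j => (j : ℕ) + 1
  | .d' j => (j : ℕ) + 1

lemma anti_orient {V : Type*} {G : SimpleGraph V} {D : V → V → Prop}
    (hD : IsOrientation G D) {u v : V} (h1 : D u v) (h2 : D v u) : False :=
  ((hD.2 u v (hD.1 u v h1)).mp h1) h2

/-- The only edges crossing the cut between columns `i` and `i+1` are the top edge and the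
bottom edge of that cut. -/
lemma cross_lemma {n : ℕ} (i : Fin n) {x y : GV n}
    (h : (gridGraph n).Adj x y) (hx : posGV x ≤ (i : ℕ)) (hy : (i : ℕ) + 1 ≤ posGV y) :
    (x = GV.v i.castSucc ∧ y = GV.v i.succ) ∨ (x = GV.w i.castSucc ∧ y = GV.w i.succ) := by
  rw [gridGraph, SimpleGraph.fromEdgeSet_adj] at h
  obtain ⟨hmem, -⟩ := h
  simp only [gridEdges, Set.mem_setOf_eq, Sym2.eq, Sym2.rel_iff', Prod.mk.injEq,
    Prod.swap_prod_mk] at hmem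
  rcases hmem with ⟨j, ⟨rfl, rfl⟩ | ⟨rfl, rfl⟩⟩ | ⟨j, ⟨rfl, rfl⟩ | ⟨rfl, rfl⟩⟩ |
    (⟨rfl, rfl⟩ | ⟨rfl, rfl⟩) | (⟨rfl, rfl⟩ | ⟨rfl, rfl⟩) | (⟨rfl, rfl⟩ | ⟨rfl, rfl⟩) |
    (⟨rfl, rfl⟩ | ⟨rfl, rfl⟩) |
    ⟨j, (⟨rfl, rfl⟩ | ⟨rfl, rfl⟩) | (⟨rfl, rfl⟩ | ⟨rfl, rfl⟩) | (⟨rfl, rfl⟩ | ⟨rfl, rfl⟩) |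
      (⟨rfl, rfl⟩ | ⟨rfl, rfl⟩)⟩ <;>
    simp only [posGV, Fin.coe_castSucc, Fin.val_succ, GV.col, Fin.val_last,
      Fin.val_zero] at hx hy
  all_goals first
    | omega
    | (left; have hji : j = i := Fin.ext (by omega); subst hji; exact ⟨rfl, rfl⟩)
    | (right; have hji : j = i := Fin.ext (by omega); subst hji; exact ⟨rfl, rfl⟩)

/-- On a directed walk starting on a side `S` and ending off it, some step leaves `S`,
and such a step can be found within any monotone segment of the walk. -/
lemma exists_cross {V : Type*} {D : V → V → Prop} {k : ℕ} {f : Fin (k + 1) → V}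
    (hf : ∀ j : Fin k, D (f j.castSucc) (f j.succ)) (S : V → Prop)
    (p q : Fin (k + 1)) (hpq : p ≤ q) (hp : S (f p)) (hq : ¬ S (f q)) :
    ∃ j : Fin k, p ≤ j.castSucc ∧ j.succ ≤ q ∧ S (f j.castSucc) ∧ ¬ S (f j.succ) := by
  obtain ⟨m, hm⟩ : ∃ m, (q : ℕ) - (p : ℕ) = m := ⟨_, rfl⟩
  induction m using Nat.strong_induction_on generalizing p with
  | _ m ih =>
    have hne : p ≠ q := by rintro rfl; exact hq hp
    have hlt : (p : ℕ) < (q : ℕ) := lt_of_le_of_ne hpq (fun h => hne (Fin.ext h))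
    have hpk : (p : ℕ) < k := lt_of_lt_of_le hlt (Nat.lt_succ_iff.mp q.isLt)
    set j0 : Fin k := ⟨(p : ℕ), hpk⟩ with hj0
    have hcs : j0.castSucc = p := Fin.ext rfl
    by_cases hS : S (f j0.succ)
    · obtain ⟨j, h1, h2, h3, h4⟩ := ih ((q : ℕ) - ((p : ℕ) + 1)) (by omega) j0.succ
        (by rw [Fin.le_def]; simp only [Fin.val_succ]; simp only [hj0, Fin.val_castSucc, Fin.val_mk] at *; omega) hS rfl
      refine ⟨j, ?_, h2, h3, h4⟩
      rw [Fin.le_def] at h1 ⊢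
      simp only [Fin.val_succ] at h1
      simp only [hj0, Fin.val_castSucc, Fin.val_mk] at *
      omega
    · exact ⟨j0, hcs ▸ le_refl p, by rw [Fin.le_def]; simp only [Fin.val_succ]; simp only [hj0, Fin.val_castSucc, Fin.val_mk] at *; omega,
        hcs ▸ hp, hS⟩

/-- A directed path going from the right side of cut `i` to its left side cannot traverse
the top edge of the cut if that edge is oriented left-to-right. -/
lemma no_wrongway_RL {n : ℕ} {D : GV n → GV n → Prop} (hD : IsOrientation (gridGraph n) D)
    (i : Fin n) {l : ℕ} {g : Fin (l + 1) → GV n}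
    (hstep : ∀ j : Fin l, D (g j.castSucc) (g j.succ)) (hinj : Function.Injective g)
    (h0 : (i : ℕ) + 1 ≤ posGV (g 0)) (hl : posGV (g (Fin.last l)) ≤ (i : ℕ))
    (Dtop : D (GV.v i.castSucc) (GV.v i.succ)) :
    ¬ EdgeOnDiwalk g (GV.v i.castSucc) (GV.v i.succ) := by
  rintro ⟨m, ⟨hm1, hm2⟩ | ⟨hm1, hm2⟩⟩
  swap
  · exact anti_orient hD Dtop (by rw [← hm1, ← hm2]; exact hstep m)
  obtain ⟨j1, -, hj1b, hj1S, hj1T⟩ := exists_cross hstep (fun x => (i : ℕ) + 1 ≤ posGV x)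
    0 m.castSucc (Fin.zero_le _) h0
    (by rw [hm1]; simp only [posGV, Fin.coe_castSucc]; omega)
  try simp only [] at hj1S hj1T
  obtain ⟨j2, hj2a, -, hj2S, hj2T⟩ := exists_cross hstep (fun x => (i : ℕ) + 1 ≤ posGV x)
    m.succ (Fin.last l) (Fin.le_last _)
    (by rw [hm2]; simp only [posGV, Fin.val_succ, Fin.coe_castSucc]; omega)
    (by omega)
  try simp only [] at hj2S hj2T
  have hc1 := cross_lemma i ((hD.1 _ _ (hstep j1)).symm) (by omega) hj1S
  have hc2 := cross_lemma i ((hD.1 _ _ (hstep j2)).symm) (by omega) hj2S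
  have b1 : g j1.castSucc = GV.w i.succ := by
    rcases hc1 with ⟨q1, q2⟩ | ⟨q1, q2⟩
    · exact absurd (by rw [← q1, ← q2]; exact hstep j1) (fun h => anti_orient hD Dtop h)
    · exact q2
  have b2 : g j2.castSucc = GV.w i.succ := by
    rcases hc2 with ⟨q1, q2⟩ | ⟨q1, q2⟩
    · exact absurd (by rw [← q1, ← q2]; exact hstep j2) (fun h => anti_orient hD Dtop h)
    · exact q2
  have heq := hinj (b1.trans b2.symm)
  have hv : (j1 : ℕ) = (j2 : ℕ) := by
    have := congrArg Fin.val heq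
    simpa using this
  rw [Fin.le_def] at hj1b hj2a
  simp only [Fin.val_succ, Fin.coe_castSucc] at hj1b hj2a
  omega

/-- A directed path going from the left side of cut `i` to its right side cannot traverse
the top edge of the cut if that edge is oriented right-to-left. -/
lemma no_wrongway_LR {n : ℕ} {D : GV n → GV n → Prop} (hD : IsOrientation (gridGraph n) D)
    (i : Fin n) {k : ℕ} {f : Fin (k + 1) → GV n}
    (hstep : ∀ j : Fin k, D (f j.castSucc) (f j.succ)) (hinj : Function.Injective f)
    (h0 : posGV (f 0) ≤ (i : ℕ)) (hl : (i : ℕ) + 1 ≤ posGV (f (Fin.last k)))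
    (Dtop : D (GV.v i.succ) (GV.v i.castSucc)) :
    ¬ EdgeOnDiwalk f (GV.v i.castSucc) (GV.v i.succ) := by
  rintro ⟨m, ⟨hm1, hm2⟩ | ⟨hm1, hm2⟩⟩
  · exact anti_orient hD Dtop (by rw [← hm1, ← hm2]; exact hstep m)
  obtain ⟨j1, -, hj1b, hj1S, hj1T⟩ := exists_cross hstep (fun x => posGV x ≤ (i : ℕ))
    0 m.castSucc (Fin.zero_le _) h0
    (by rw [hm1]; simp only [posGV, Fin.val_succ]; omega)
  try simp only [] at hj1S hj1T
  obtain ⟨j2, hj2a, -, hj2S, hj2T⟩ := exists_cross hstep (fun x => posGV x ≤ (i : ℕ))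
    m.succ (Fin.last k) (Fin.le_last _)
    (by rw [hm2]; simp only [posGV, Fin.coe_castSucc]; omega)
    (by omega)
  try simp only [] at hj2S hj2T
  have hc1 := cross_lemma i (hD.1 _ _ (hstep j1)) hj1S (by omega)
  have hc2 := cross_lemma i (hD.1 _ _ (hstep j2)) hj2S (by omega)
  have b1 : f j1.castSucc = GV.w i.castSucc := by
    rcases hc1 with ⟨q1, q2⟩ | ⟨q1, q2⟩
    · exact absurd (by rw [← q1, ← q2]; exact hstep j1) (fun h => anti_orient hD Dtop h)
    · exact q1
  have b2 : f j2.castSucc = GV.w i.castSucc := by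
    rcases hc2 with ⟨q1, q2⟩ | ⟨q1, q2⟩
    · exact absurd (by rw [← q1, ← q2]; exact hstep j2) (fun h => anti_orient hD Dtop h)
    · exact q1
  have heq := hinj (b1.trans b2.symm)
  have hv : (j1 : ℕ) = (j2 : ℕ) := by
    have := congrArg Fin.val heq
    simpa using this
  rw [Fin.le_def] at hj1b hj2a
  simp only [Fin.val_succ, Fin.coe_castSucc] at hj1b hj2a
  omega

/-- In every strong orientation of the gadget graph `G(a₁,…,aₙ)`, every directed path `P`
from `s` to `t` and every directed path `Q` from `t` to `s` partition the top edges: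
each top edge lies on `P` or on `Q`, and none lies on both. -/
theorem gridGraph_top_edges_partition (n : ℕ) (a : Fin n → ℕ) (ha : ∀ i, 0 < a i)
    (D : GV n → GV n → Prop) (hD : IsOrientation (gridGraph n) D) (hstrong : IsStrong D)
    {k : ℕ} (f : Fin (k + 1) → GV n) (hP : IsDipath D f GV.s GV.t)
    {l : ℕ} (g : Fin (l + 1) → GV n) (hQ : IsDipath D g GV.t GV.s) :
    ∀ i : Fin n,
      (EdgeOnDiwalk f (GV.v i.castSucc) (GV.v i.succ) ∨
        EdgeOnDiwalk g (GV.v i.castSucc) (GV.v i.succ)) ∧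
      ¬ (EdgeOnDiwalk f (GV.v i.castSucc) (GV.v i.succ) ∧
        EdgeOnDiwalk g (GV.v i.castSucc) (GV.v i.succ)) := by
  intro i
  obtain ⟨⟨hf0, hfl, hfstep⟩, hfinj⟩ := hP
  obtain ⟨⟨hg0, hgl, hgstep⟩, hginj⟩ := hQ
  have hin : (i : ℕ) < n := i.isLt
  have hmain : EdgeOnDiwalk f (GV.v i.castSucc) (GV.v i.succ) ∨
      EdgeOnDiwalk g (GV.v i.castSucc) (GV.v i.succ) := by
    obtain ⟨jP, -, -, hP1, hP2⟩ := exists_cross hfstep (fun x => posGV x ≤ (i : ℕ))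
      0 (Fin.last k) (Fin.zero_le _) (by rw [hf0]; exact Nat.zero_le _)
      (by rw [hfl]; simp only [posGV]; omega)
    try simp only [] at hP1 hP2
    have hPcase := cross_lemma i (hD.1 _ _ (hfstep jP)) hP1 (by omega)
    obtain ⟨jQ, -, -, hQ1, hQ2⟩ := exists_cross hgstep (fun x => (i : ℕ) + 1 ≤ posGV x)
      0 (Fin.last l) (Fin.zero_le _) (by rw [hg0]; simp only [posGV]; omega)
      (by rw [hgl]; simp only [posGV]; omega)
    try simp only [] at hQ1 hQ2
    have hQcase := cross_lemma i ((hD.1 _ _ (hgstep jQ)).symm) (by omega) hQ1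
    rcases hPcase with ⟨e1, e2⟩ | ⟨e1, e2⟩
    · exact Or.inl ⟨jP, Or.inl ⟨e1, e2⟩⟩
    · rcases hQcase with ⟨q1, q2⟩ | ⟨q1, q2⟩
      · exact Or.inr ⟨jQ, Or.inr ⟨q2, q1⟩⟩
      · have d1 : D (GV.w i.castSucc) (GV.w i.succ) := by rw [← e1, ← e2]; exact hfstep jP
        have d2 : D (GV.w i.succ) (GV.w i.castSucc) := by rw [← q1, ← q2]; exact hgstep jQ
        exact (anti_orient hD d1 d2).elim
  refine ⟨hmain, ?_⟩
  rintro ⟨⟨m, ⟨hm1, hm2⟩ | ⟨hm1, hm2⟩⟩, hQm⟩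
  · exact no_wrongway_RL hD i hgstep hginj (by rw [hg0]; simp only [posGV]; omega)
      (by rw [hgl]; exact Nat.zero_le _) (by rw [← hm1, ← hm2]; exact hfstep m) hQm
  · exact no_wrongway_LR hD i hfstep hfinj (by rw [hf0]; exact Nat.zero_le _)
      (by rw [hfl]; simp only [posGV]; omega) (by rw [← hm1, ← hm2]; exact hfstep m)
      ⟨m, Or.inr ⟨hm1, hm2⟩⟩
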